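/- Let x₀ ∈ ℝ^{k₀} be fixed, let h_i : ℝ^{k_{i−1}} × ℝ^m → ℝ^{k_i} (i = 1,…,n) and f : ℝ^{k₁} × ⋯ × ℝ^{k_n} → ℝ be differentiable, and define x_i(θ) = h_i(x_{i−1}(θ), θ) recursively. Define row vectors λ_i(θ) by the adjoint equations λ_n^T = ∂f/∂x_n and λ_{i−1}^T = ∂f/∂x_{i−1} + λ_i^T ∂h_i/∂x_{i−1} for i = n,…,2, where the partial derivatives of f are evaluated at (x₁(θ),…,x_n(θ)) and those of h_i at (x_{i−1}(θ), θ). Then F(θ) := f(x₁(θ),…,x_n(θ)) is differentiable and its gradient satisfies dF/dθ = Σ_{i=1}^n λ_i(θ)^T · (∂h_i/∂θ)(x_{i−1}(θ), θ). -/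

import Mathlib

open scoped BigOperators

noncomputable section

/-- The forward tangent (derivative of the state `x i` with respect to `θ`),
defined by the forward recursion `D 0 = 0`, `D (i+1) = A i ∘ D i + B i`. -/
noncomputable def adjD (m : ℕ) (k : ℕ → ℕ)
    (h : (i : ℕ) → EuclideanSpace ℝ (Fin (k i)) × EuclideanSpace ℝ (Fin m) →
      EuclideanSpace ℝ (Fin (k (i + 1))))
    (x : (i : ℕ) → EuclideanSpace ℝ (Fin m) → EuclideanSpace ℝ (Fin (k i)))
    (θ : EuclideanSpace ℝ (Fin m)) :
    (i : ℕ) → (EuclideanSpace ℝ (Fin m) →L[ℝ] EuclideanSpace ℝ (Fin (k i)))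
  | 0 => 0
  | (i + 1) =>
      ((fderiv ℝ (h i) (x i θ, θ)).comp (ContinuousLinearMap.inl ℝ _ _)).comp
        (adjD m k h x θ i)
      + (fderiv ℝ (h i) (x i θ, θ)).comp (ContinuousLinearMap.inr ℝ _ _)

/-- Partial-derivative-times-tangent summand, as a total function on `ℕ`. -/
noncomputable def adjP (n m : ℕ) (k : ℕ → ℕ)
    (f : ((j : Fin n) → EuclideanSpace ℝ (Fin (k (j.1 + 1)))) → ℝ)
    (X : (j : Fin n) → EuclideanSpace ℝ (Fin (k (j.1 + 1))))
    (D : (i : ℕ) → (EuclideanSpace ℝ (Fin m) →L[ℝ] EuclideanSpace ℝ (Fin (k i))))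
    (i : ℕ) : EuclideanSpace ℝ (Fin m) →L[ℝ] ℝ :=
  if hi : i < n then
    ((fderiv ℝ f X).comp (ContinuousLinearMap.pi
      (Pi.single (⟨i, hi⟩ : Fin n) (ContinuousLinearMap.id ℝ _)))).comp (D (i + 1))
  else 0

theorem adj_comp_prod {𝕜 : Type*} [NontriviallyNormedField 𝕜] {W E F G : Type*}
    [NormedAddCommGroup W] [NormedSpace 𝕜 W]
    [NormedAddCommGroup E] [NormedSpace 𝕜 E]
    [NormedAddCommGroup F] [NormedSpace 𝕜 F]
    [NormedAddCommGroup G] [NormedSpace 𝕜 G]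
    (L : E × F →L[𝕜] G) (u : W →L[𝕜] E) (v : W →L[𝕜] F) :
    L.comp (u.prod v) =
      (L.comp (ContinuousLinearMap.inl 𝕜 E F)).comp u
      + (L.comp (ContinuousLinearMap.inr 𝕜 E F)).comp v := by
  ext w
  simp only [ContinuousLinearMap.comp_apply, ContinuousLinearMap.prod_apply,
    ContinuousLinearMap.add_apply, ContinuousLinearMap.inl_apply,
    ContinuousLinearMap.inr_apply]
  rw [← map_add]
  simp

/-- **The adjoint method for deterministic recursions.**
`x i θ` is the state `x_i(θ)` defined recursively by `x_i = h_i(x_{i-1}, θ)` from the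
fixed input `x₀`; indices are shifted so that the `h` indexed by `i : ℕ` is the paper's
`h_{i+1}` and `lam j` is the paper's adjoint variable `λ_{j+1}`.  The adjoint equations are
`λ_n^T = ∂f/∂x_n` and `λ_{i-1}^T = ∂f/∂x_{i-1} + λ_i^T ∂h_i/∂x_{i-1}`, where the partial
derivative of `f` in its `j`-th slot is expressed via `Function.update`.  The conclusion is
that `F(θ) = f(x₁(θ), …, x_n(θ))` is differentiable with derivative
`∑_{i=1}^n λ_i^T ∂h_i/∂θ`. -/
theorem stmt_0
    (n m : ℕ) (hn : 1 ≤ n) (k : ℕ → ℕ)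
    (x₀ : EuclideanSpace ℝ (Fin (k 0)))
    (h : (i : ℕ) → EuclideanSpace ℝ (Fin (k i)) × EuclideanSpace ℝ (Fin m) →
      EuclideanSpace ℝ (Fin (k (i + 1))))
    (f : ((j : Fin n) → EuclideanSpace ℝ (Fin (k (j.1 + 1)))) → ℝ)
    (hh : ∀ i, Differentiable ℝ (h i))
    (hf : Differentiable ℝ f)
    (x : (i : ℕ) → EuclideanSpace ℝ (Fin m) → EuclideanSpace ℝ (Fin (k i)))
    (hx0 : ∀ θ, x 0 θ = x₀)
    (hxs : ∀ i θ, x (i + 1) θ = h i (x i θ, θ))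
    (X : EuclideanSpace ℝ (Fin m) → (j : Fin n) → EuclideanSpace ℝ (Fin (k (j.1 + 1))))
    (hX : ∀ θ j, X θ j = x (j.1 + 1) θ)
    (lam : (j : ℕ) → EuclideanSpace ℝ (Fin m) →
      (EuclideanSpace ℝ (Fin (k (j + 1))) →L[ℝ] ℝ))
    (hlam_top : ∀ θ, lam (n - 1) θ =
      fderiv ℝ (fun v => f (Function.update (X θ) ⟨n - 1, by omega⟩ v))
        (X θ ⟨n - 1, by omega⟩))
    (hlam_rec : ∀ θ (j : ℕ) (hj : j + 1 < n), lam j θ =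
      fderiv ℝ (fun v => f (Function.update (X θ) ⟨j, by omega⟩ v)) (X θ ⟨j, by omega⟩)
      + (lam (j + 1) θ).comp
          ((fderiv ℝ (h (j + 1)) (x (j + 1) θ, θ)).comp
            (ContinuousLinearMap.inl ℝ _ _))) :
    ∀ θ, HasFDerivAt (fun θ' => f (X θ'))
      (∑ j : Fin n, (lam j.1 θ).comp
        ((fderiv ℝ (h j.1) (x j.1 θ, θ)).comp (ContinuousLinearMap.inr ℝ _ _))) θ := by
  intro θ
  classical
  set D := adjD m k h x θ with hDdef
  -- forward differentiation of the states
  have hD : ∀ i, HasFDerivAt (x i) (D i) θ := by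
    intro i
    induction i with
    | zero =>
      have hx0' : x 0 = fun _ => x₀ := funext hx0
      rw [hx0', hDdef, adjD]
      exact hasFDerivAt_const _ _
    | succ i ih =>
      have hx' : x (i + 1) = fun θ' => h i (x i θ', θ') := funext fun θ' => hxs i θ'
      rw [hx', hDdef, adjD]
      have hcomp : HasFDerivAt (fun θ' => h i (x i θ', θ'))
          ((fderiv ℝ (h i) (x i θ, θ)).comp
            ((D i).prod (ContinuousLinearMap.id ℝ _))) θ :=
        HasFDerivAt.comp θ ((hh i (x i θ, θ)).hasFDerivAt) (HasFDerivAt.prodMk ih (hasFDerivAt_id θ))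
      have hpr : (D i).prod (ContinuousLinearMap.id ℝ _)
          = (D i).prod (ContinuousLinearMap.id ℝ _) := rfl
      rw [adj_comp_prod] at hcomp
      exact hcomp
  -- derivative of X
  have hXD : HasFDerivAt X (ContinuousLinearMap.pi fun j : Fin n => D (j.1 + 1)) θ := by
    apply hasFDerivAt_pi''
    intro j
    have hXj : (fun θ' => X θ' j) = x (j.1 + 1) := funext fun θ' => hX θ' j
    rw [ContinuousLinearMap.proj_pi, hXj]
    exact hD _
  have hF : HasFDerivAt (fun θ' => f (X θ'))
      ((fderiv ℝ f (X θ)).comp (ContinuousLinearMap.pi fun j : Fin n => D (j.1 + 1))) θ :=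
    (hf (X θ)).hasFDerivAt.comp θ hXD
  -- partial derivatives of f via update
  have hP : ∀ j : Fin n, fderiv ℝ (fun v => f (Function.update (X θ) j v)) (X θ j)
      = (fderiv ℝ f (X θ)).comp (ContinuousLinearMap.pi
          (Pi.single j (ContinuousLinearMap.id ℝ _))) := by
    intro j
    have h2 := hasFDerivAt_update (𝕜 := ℝ) (X θ) (i := j) (X θ j)
    have h3 := (hf (Function.update (X θ) j (X θ j))).hasFDerivAt.comp (X θ j) h2
    rw [Function.update_eq_self] at h3
    exact h3.fderiv
  -- the continuous linear "single" map evaluates to Pi.single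
  have hS : ∀ (j : Fin n) (v : EuclideanSpace ℝ (Fin (k (j.1 + 1)))),
      ContinuousLinearMap.pi (Pi.single j (ContinuousLinearMap.id ℝ _)) v
        = Pi.single (M := fun i : Fin n => EuclideanSpace ℝ (Fin (k (i.1 + 1)))) j v := by
    intro j v
    funext i
    rw [ContinuousLinearMap.pi_apply]
    by_cases hij : i = j
    · subst hij
      rw [Pi.single_eq_same, Pi.single_eq_same]
      rfl
    · rw [Pi.single_eq_of_ne hij, Pi.single_eq_of_ne hij]
      rfl
  -- split the derivative of F into partial contributions
  have hsplit : (fderiv ℝ f (X θ)).comp (ContinuousLinearMap.pi fun j : Fin n => D (j.1 + 1))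
      = ∑ j : Fin n, adjP n m k f (X θ) D j.1 := by
    have hterm : ∀ j : Fin n, adjP n m k f (X θ) D j.1
        = ((fderiv ℝ f (X θ)).comp (ContinuousLinearMap.pi
            (Pi.single j (ContinuousLinearMap.id ℝ _)))).comp (D (j.1 + 1)) := by
      intro j
      rw [adjP, dif_pos j.2]
    rw [Finset.sum_congr rfl fun j _ => hterm j]
    ext w
    rw [ContinuousLinearMap.sum_apply]
    simp only [ContinuousLinearMap.comp_apply, ContinuousLinearMap.pi_apply]
    rw [← map_sum]
    congr 1
    have := Finset.univ_sum_single (fun j : Fin n => D (j.1 + 1) w)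
    calc (fun j : Fin n => D (j.1 + 1) w)
        = ∑ j : Fin n, Pi.single (M := fun i : Fin n => EuclideanSpace ℝ (Fin (k (i.1 + 1)))) j
            (D (j.1 + 1) w) := this.symm
      _ = ∑ j : Fin n, ContinuousLinearMap.pi
            (Pi.single j (ContinuousLinearMap.id ℝ _)) (D (j.1 + 1) w) := by
          refine Finset.sum_congr rfl fun j _ => ?_
          rw [hS]
  -- the backward (adjoint) telescoping identity
  have claim : ∀ d i, i + (d + 1) = n →
      ∑ j ∈ Finset.Ico i n, adjP n m k f (X θ) D j
        = (lam i θ).comp (D (i + 1))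
          + ∑ j ∈ Finset.Ico (i + 1) n, (lam j θ).comp
              ((fderiv ℝ (h j) (x j θ, θ)).comp (ContinuousLinearMap.inr ℝ _ _)) := by
    intro d
    induction d with
    | zero =>
      intro i hin
      subst hin
      rw [Finset.Ico_self, Finset.sum_empty, add_zero, Nat.Ico_succ_singleton,
        Finset.sum_singleton, adjP, dif_pos (show i < i + (0 + 1) by omega)]
      have htop := hlam_top θ
      have hli : lam i θ = (fderiv ℝ f (X θ)).comp (ContinuousLinearMap.pi
          (Pi.single (⟨i, show i < i + (0 + 1) by omega⟩ : Fin (i + (0 + 1)))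
            (ContinuousLinearMap.id ℝ _))) :=
        htop.trans (hP ⟨i, show i < i + (0 + 1) by omega⟩)
      rw [hli]
    | succ d ih =>
      intro i hin
      have hi : i < n := by omega
      have hi1 : i + 1 < n := by omega
      rw [Finset.sum_eq_sum_Ico_succ_bot hi, ih (i + 1) (by omega),
        Finset.sum_eq_sum_Ico_succ_bot hi1
          (f := fun j => (lam j θ).comp
            ((fderiv ℝ (h j) (x j θ, θ)).comp (ContinuousLinearMap.inr ℝ _ _)))]
      have hDrec : D (i + 1 + 1)
          = ((fderiv ℝ (h (i + 1)) (x (i + 1) θ, θ)).comp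
              (ContinuousLinearMap.inl ℝ _ _)).comp (D (i + 1))
            + (fderiv ℝ (h (i + 1)) (x (i + 1) θ, θ)).comp
              (ContinuousLinearMap.inr ℝ _ _) := by
        rw [hDdef]; rfl
      have hlami : (lam i θ).comp (D (i + 1))
          = adjP n m k f (X θ) D i
            + ((lam (i + 1) θ).comp ((fderiv ℝ (h (i + 1)) (x (i + 1) θ, θ)).comp
                (ContinuousLinearMap.inl ℝ _ _))).comp (D (i + 1)) := by
        rw [hlam_rec θ i hi1, ContinuousLinearMap.add_comp, adjP, dif_pos hi,
          hP ⟨i, hi⟩]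
      rw [hlami, hDrec, ContinuousLinearMap.comp_add, ← ContinuousLinearMap.comp_assoc]
      abel
  -- assemble
  have hmain := claim (n - 1) 0 (by omega)
  have hD1 : D (0 + 1) = (fderiv ℝ (h 0) (x 0 θ, θ)).comp (ContinuousLinearMap.inr ℝ _ _) := by
    rw [hDdef]
    show ((fderiv ℝ (h 0) (x 0 θ, θ)).comp (ContinuousLinearMap.inl ℝ _ _)).comp 0
        + (fderiv ℝ (h 0) (x 0 θ, θ)).comp (ContinuousLinearMap.inr ℝ _ _) = _
    rw [ContinuousLinearMap.comp_zero]
    exact zero_add _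
  rw [hD1] at hmain
  have hgoal : (∑ j : Fin n, (lam j.1 θ).comp
      ((fderiv ℝ (h j.1) (x j.1 θ, θ)).comp (ContinuousLinearMap.inr ℝ _ _)))
      = (fderiv ℝ f (X θ)).comp (ContinuousLinearMap.pi fun j : Fin n => D (j.1 + 1)) := by
    rw [hsplit, Fin.sum_univ_eq_sum_range
        (fun j => (lam j θ).comp
          ((fderiv ℝ (h j) (x j θ, θ)).comp (ContinuousLinearMap.inr ℝ _ _))),
      Fin.sum_univ_eq_sum_range (fun j => adjP n m k f (X θ) D j),
      Finset.range_eq_Ico, hmain,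
      ← Finset.sum_eq_sum_Ico_succ_bot (show 0 < n by omega)
        (f := fun j => (lam j θ).comp
          ((fderiv ℝ (h j) (x j θ, θ)).comp (ContinuousLinearMap.inr ℝ _ _)))]
  rw [hgoal]
  exact hF
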